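/- Let σ be a real constant and let w : I → ℝ be a positive, twice continuously differentiable, non-constant function on an open interval I satisfying w''(v) = σ·w(v)^{−3} for all v ∈ I. Then either (a) σ < 0 and there exist a constant p and a sign ε ∈ {+1, −1} such that w(v)² = p + 2ε√(−σ)·v on I, or (b) there exist constants p and q with q ≠ 0 such that q·w(v)² = (p + q·v)² + σ on I. -/

import Mathlib

/-- If `f` has derivative `0` at every point of an open convex set, it is constant there. -/
lemma const_of_hasDerivAt_zero {s : Set ℝ} (hs : Convex ℝ s) (ho : IsOpen s) {f : ℝ → ℝ}
    (hf : ∀ x ∈ s, HasDerivAt f 0 x) {x y : ℝ} (hx : x ∈ s) (hy : y ∈ s) : f x = f y := by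
  refine hs.is_const_of_fderivWithin_eq_zero
    (fun z hz => ((hf z hz).differentiableAt).differentiableWithinAt) (fun z hz => ?_) hx hy
  rw [fderivWithin_of_isOpen ho hz, (hf z hz).hasFDerivAt.fderiv]
  ext; simp

/-- Classification of the non-constant positive solutions of `w'' = σ·w⁻³` on an
open interval: either `σ < 0` and `w² = p ± 2√(−σ)·v`, or `q·w² = (p + q·v)² + σ`
for some constants `p`, `q ≠ 0`. -/
theorem stmt_8 (σ : ℝ) (a b : ℝ) (w : ℝ → ℝ)
    (hw_pos : ∀ v ∈ Set.Ioo a b, 0 < w v)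
    (hw_smooth : ContDiffOn ℝ 2 w (Set.Ioo a b))
    (hw_nonconst : ∃ v₁ ∈ Set.Ioo a b, ∃ v₂ ∈ Set.Ioo a b, w v₁ ≠ w v₂)
    (hode : ∀ v ∈ Set.Ioo a b, deriv (deriv w) v = σ / (w v) ^ 3) :
    (σ < 0 ∧ ∃ (p ε : ℝ), (ε = 1 ∨ ε = -1) ∧
        ∀ v ∈ Set.Ioo a b, (w v) ^ 2 = p + 2 * ε * Real.sqrt (-σ) * v) ∨
    (∃ p q : ℝ, q ≠ 0 ∧
        ∀ v ∈ Set.Ioo a b, q * (w v) ^ 2 = (p + q * v) ^ 2 + σ) := by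
  have hSo : IsOpen (Set.Ioo a b) := isOpen_Ioo
  have hSc : Convex ℝ (Set.Ioo a b) := convex_Ioo a b
  obtain ⟨v₁, hv₁, v₂, hv₂, hne⟩ := hw_nonconst
  -- differentiability facts
  have hw_diff : ∀ v ∈ Set.Ioo a b, HasDerivAt w (deriv w v) v := fun v hv =>
    ((hw_smooth.differentiableOn (by norm_num)).differentiableAt (hSo.mem_nhds hv)).hasDerivAt
  have hw'_cd : ContDiffOn ℝ 1 (deriv w) (Set.Ioo a b) :=
    hw_smooth.deriv_of_isOpen hSo (by norm_num)
  have hw''_eq : ∀ v ∈ Set.Ioo a b, HasDerivAt (deriv w) (σ / (w v) ^ 3) v := by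
    intro v hv
    have h := ((hw'_cd.differentiableOn (by norm_num)).differentiableAt (hSo.mem_nhds hv)).hasDerivAt
    rwa [hode v hv] at h
  -- the energy is constant
  obtain ⟨E, hEdef⟩ : ∃ E : ℝ, E = (deriv w v₁) ^ 2 + σ / (w v₁) ^ 2 := ⟨_, rfl⟩
  have henergy : ∀ v ∈ Set.Ioo a b, (deriv w v) ^ 2 + σ / (w v) ^ 2 = E := by
    intro v hv
    rw [hEdef]
    exact const_of_hasDerivAt_zero hSc hSo (f := fun x => (deriv w x) ^ 2 + σ / (w x) ^ 2)
      (fun z hz => by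
        have hwz : w z ≠ 0 := (hw_pos z hz).ne'
        have h1 : HasDerivAt (fun x => (deriv w x) ^ 2)
            (2 * deriv w z ^ 1 * (σ / (w z) ^ 3)) z := (hw''_eq z hz).pow 2
        have h2 : HasDerivAt (fun x => σ / (w x) ^ 2)
            ((0 * (w z) ^ 2 - σ * (2 * w z ^ 1 * deriv w z)) / ((w z) ^ 2) ^ 2) z :=
          (hasDerivAt_const z σ).div ((hw_diff z hz).pow 2) (by positivity)
        have := h1.add h2
        refine this.congr_deriv (Eq.symm ?_)
        field_simp
        ring) hv hv₁
  -- (w²)' minus its predicted value has zero derivative, hence vanishes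
  obtain ⟨c₁, hc₁def⟩ : ∃ c : ℝ, c = 2 * w v₁ * deriv w v₁ - 2 * E * v₁ := ⟨_, rfl⟩
  have hD : ∀ v ∈ Set.Ioo a b,
      2 * w v * deriv w v - (2 * E * v + c₁) = 0 := by
    intro v hv
    have hconst : (fun x => 2 * w x * deriv w x - (2 * E * x + c₁)) v
        = (fun x => 2 * w x * deriv w x - (2 * E * x + c₁)) v₁ := by
      refine const_of_hasDerivAt_zero hSc hSo
        (f := fun x => 2 * w x * deriv w x - (2 * E * x + c₁)) (fun z hz => ?_) hv hv₁
      have hwz : w z ≠ 0 := (hw_pos z hz).ne'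
      have h1 : HasDerivAt (fun x => 2 * w x * deriv w x)
          (2 * deriv w z * deriv w z + 2 * w z * (σ / (w z) ^ 3)) z :=
        ((hw_diff z hz).const_mul 2).mul (hw''_eq z hz)
      have h2 : HasDerivAt (fun x => 2 * E * x + c₁) (2 * E) z := by
        simpa using ((hasDerivAt_id z).const_mul (2 * E)).add_const c₁
      have := h1.sub h2
      refine this.congr_deriv (Eq.symm ?_)
      have hE := henergy z hz
      field_simp at hE ⊢
      linear_combination (-2) * hE
    simp only at hconst
    rw [hconst, hc₁def]; ring
  -- w² is the quadratic E v² + c₁ v + c₀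
  obtain ⟨c₀, hc₀def⟩ : ∃ c : ℝ, c = (w v₁) ^ 2 - (E * v₁ ^ 2 + c₁ * v₁) := ⟨_, rfl⟩
  have hf : ∀ v ∈ Set.Ioo a b, (w v) ^ 2 = E * v ^ 2 + c₁ * v + c₀ := by
    intro v hv
    have hconst : (fun x => (w x) ^ 2 - (E * x ^ 2 + c₁ * x)) v
        = (fun x => (w x) ^ 2 - (E * x ^ 2 + c₁ * x)) v₁ := by
      refine const_of_hasDerivAt_zero hSc hSo
        (f := fun x => (w x) ^ 2 - (E * x ^ 2 + c₁ * x)) (fun z hz => ?_) hv hv₁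
      have h1 : HasDerivAt (fun x => (w x) ^ 2) (2 * w z ^ 1 * deriv w z) z :=
        (hw_diff z hz).pow 2
      have h2 : HasDerivAt (fun x => E * x ^ 2 + c₁ * x)
          (E * (2 * z ^ 1 * 1) + c₁ * 1) z :=
        (((hasDerivAt_id z).pow 2).const_mul E).add ((hasDerivAt_id z).const_mul c₁)
      have := h1.sub h2
      have hz0 := hD z hz
      refine this.congr_deriv (Eq.symm ?_)
      simp only [pow_one] at *
      linarith [hz0]
    simp only at hconst
    rw [hc₀def]; linarith [hconst]
  -- key relation for σ
  have hσ : σ = E * c₀ - c₁ ^ 2 / 4 := by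
    have hE1 := henergy v₁ hv₁
    have hw1 : w v₁ ≠ 0 := (hw_pos v₁ hv₁).ne'
    field_simp at hE1
    rw [hc₀def, hc₁def]
    linear_combination hE1
  by_cases hE0 : E = 0
  · -- case (a)
    left
    have hsq : ∀ v ∈ Set.Ioo a b, (w v) ^ 2 = c₁ * v + c₀ := by
      intro v hv; rw [hf v hv, hE0]; ring
    have hc₁ne : c₁ ≠ 0 := by
      intro h
      apply hne
      have e1 := hsq v₁ hv₁; have e2 := hsq v₂ hv₂
      rw [h] at e1 e2
      have : (w v₁) ^ 2 = (w v₂) ^ 2 := by rw [e1, e2]; ring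
      calc w v₁ = Real.sqrt ((w v₁) ^ 2) := (Real.sqrt_sq (hw_pos v₁ hv₁).le).symm
        _ = Real.sqrt ((w v₂) ^ 2) := by rw [this]
        _ = w v₂ := Real.sqrt_sq (hw_pos v₂ hv₂).le
    have hσval : σ = -(c₁ ^ 2) / 4 := by rw [hσ, hE0]; ring
    have hσneg : σ < 0 := by
      rw [hσval]
      have : 0 < c₁ ^ 2 := by positivity
      nlinarith
    have hsqrt : Real.sqrt (-σ) = |c₁| / 2 := by
      rw [show -σ = (|c₁| / 2) ^ 2 by rw [hσval, div_pow, sq_abs]; ring]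
      exact Real.sqrt_sq (by positivity)
    refine ⟨hσneg, c₀, if 0 ≤ c₁ then 1 else -1, by split <;> simp, fun v hv => ?_⟩
    rw [hsq v hv, hsqrt]
    rcases le_or_gt 0 c₁ with h | h
    · rw [if_pos h, abs_of_nonneg h]; ring
    · rw [if_neg (not_le.mpr h), abs_of_neg h]; ring
  · -- case (b)
    right
    refine ⟨c₁ / 2, E, hE0, fun v hv => ?_⟩
    rw [hf v hv, hσ]; ring
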